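/- Let h be an M-convex function with finite nonempty effective domain and let b : E → {0,1}. Assume k̲ + 1 ≤ k̄. Then for any i with k̲ + 1 ≤ i ≤ k̄, any x ∈ 𝒮_i, and any x' ∈ 𝒮_{k̲}, there exists a minimum transition (u,v) with respect to x such that x(u) > x'(u) and x'(v) > x(v). -/

import Mathlib

open scoped BigOperators

/-- Characteristic vector of a singleton `{u}`. -/
def chiv {E : Type*} [DecidableEq E] (u : E) : E → ℤ := fun e => if e = u then 1 else 0

/-- M-convexity (with nonempty effective domain) for `h : (E → ℤ) → ℝ ∪ {+∞}`. -/
def MConvex {E : Type*} [DecidableEq E] (h : (E → ℤ) → WithTop ℝ) : Prop :=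
  (∃ x, h x < ⊤) ∧
  ∀ x y : E → ℤ, h x < ⊤ → h y < ⊤ → ∀ u : E, y u < x u →
    ∃ v : E, x v < y v ∧
      h (x - chiv u + chiv v) + h (y + chiv u - chiv v) ≤ h x + h y

/-- `⟨b,x⟩ = ∑ e, b e * x e`. -/
def innerb {E : Type*} [Fintype E] (b : E → ℤ) (x : E → ℤ) : ℤ := ∑ e, b e * x e

/-- `𝒮_i`: the minimizers of `h` on `𝒬_i = {x ∈ dom h : ⟨b,x⟩ = i}`. -/
def Sset {E : Type*} [Fintype E] (h : (E → ℤ) → WithTop ℝ) (b : E → ℤ) (i : ℤ) :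
    Set (E → ℤ) :=
  {x | h x < ⊤ ∧ innerb b x = i ∧ ∀ y : E → ℤ, h y < ⊤ → innerb b y = i → h x ≤ h y}

/-- A transition `(u,v)` with respect to `x`: `u ∈ E₁`, `v ∈ E₀`, and
`x - χ_u + χ_v ∈ dom h`. -/
def IsTransitionM {E : Type*} [DecidableEq E] (h : (E → ℤ) → WithTop ℝ) (b : E → ℤ)
    (x : E → ℤ) (u v : E) : Prop :=
  b u = 1 ∧ b v = 0 ∧ h (x - chiv u + chiv v) < ⊤

/-- The cost `h(x;u,v) = h(x - χ_u + χ_v) - h(x)` of a transition. -/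
noncomputable def transCostM {E : Type*} [DecidableEq E] (h : (E → ℤ) → WithTop ℝ)
    (x : E → ℤ) (u v : E) : ℝ :=
  (h (x - chiv u + chiv v)).untopD 0 - (h x).untopD 0

/-- A minimum transition with respect to `x`. -/
def IsMinTransitionM {E : Type*} [Fintype E] [DecidableEq E] (h : (E → ℤ) → WithTop ℝ)
    (b : E → ℤ) (x : E → ℤ) (u v : E) : Prop :=
  IsTransitionM h b x u v ∧
    ∀ u' v' : E, IsTransitionM h b x u' v' →
      transCostM h x u v ≤ transCostM h x u' v'

set_option linter.unusedSectionVars false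
set_option linter.unusedVariables false

section Aux
variable {E : Type*} [Fintype E] [DecidableEq E]

def dist1 (x y : E → ℤ) : ℕ := ∑ e, (x e - y e).natAbs

lemma dist1_comm (x y : E → ℤ) : dist1 x y = dist1 y x :=
  Finset.sum_congr rfl fun e _ => by omega

lemma dist1_eq_zero {x y : E → ℤ} (h : dist1 x y = 0) : x = y := by
  funext e
  have := (Finset.sum_eq_zero_iff).mp h e (Finset.mem_univ e)
  omega

lemma apply_add_sub (y : E → ℤ) (u v e : E) :
    (y + chiv u - chiv v) e = y e + (if e = u then 1 else 0) - (if e = v then 1 else 0) := rfl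

lemma apply_sub_add (y : E → ℤ) (u v e : E) :
    (y - chiv u + chiv v) e = y e - (if e = u then 1 else 0) + (if e = v then 1 else 0) := rfl

lemma dist_lt (x y : E → ℤ) (u v : E) (huv : u ≠ v) (h1 : y u < x u) (h2 : x v < y v) :
    dist1 x (y + chiv u - chiv v) < dist1 x y := by
  apply Finset.sum_lt_sum
  · intro e _
    rw [apply_add_sub]
    split_ifs with hA hB hB <;>
      first | omega | (subst hA; omega) | (subst hB; omega)
  · refine ⟨u, Finset.mem_univ u, ?_⟩
    rw [apply_add_sub, if_pos rfl, if_neg huv]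
    omega

lemma sum_b_chiv (b : E → ℤ) (u : E) : ∑ e, b e * chiv u e = b u := by
  simp [chiv, Finset.sum_ite_eq']

lemma innerb_sub_add (b x : E → ℤ) (u v : E) :
    innerb b (x - chiv u + chiv v) = innerb b x - b u + b v := by
  unfold innerb
  simp only [Pi.add_apply, Pi.sub_apply, mul_add, mul_sub]
  rw [Finset.sum_add_distrib, Finset.sum_sub_distrib, sum_b_chiv, sum_b_chiv]

lemma innerb_add_sub (b x : E → ℤ) (u v : E) :
    innerb b (x + chiv u - chiv v) = innerb b x + b u - b v := by
  unfold innerb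
  simp only [Pi.add_apply, Pi.sub_apply, mul_add, mul_sub]
  rw [Finset.sum_sub_distrib, Finset.sum_add_distrib, sum_b_chiv, sum_b_chiv]

lemma exists_dir {b x y : E → ℤ} (hb : ∀ e, b e = 0 ∨ b e = 1)
    (hlt : innerb b y < innerb b x) : ∃ u, b u = 1 ∧ y u < x u := by
  have hsum : (0:ℤ) < ∑ e, b e * (x e - y e) := by
    have heq : ∑ e, b e * (x e - y e) = innerb b x - innerb b y := by
      unfold innerb
      simp only [mul_sub]
      rw [Finset.sum_sub_distrib]
    omega
  obtain ⟨e, _, he⟩ := Finset.exists_lt_of_sum_lt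
    (f := fun _ => (0:ℤ)) (g := fun e => b e * (x e - y e)) (by simpa using hsum)
  rcases hb e with h0 | h1
  · rw [h0] at he; omega
  · exact ⟨e, h1, by rw [h1] at he; omega⟩

lemma fin_left {a b c : WithTop ℝ} (h : a + b ≤ c) (hc : c < ⊤) : a < ⊤ := by
  rcases eq_or_ne a ⊤ with rfl | ha
  · rw [top_add] at h; exact absurd (top_le_iff.mp h) hc.ne
  · exact ha.lt_top

lemma fin_right {a b c : WithTop ℝ} (h : a + b ≤ c) (hc : c < ⊤) : b < ⊤ := by
  rcases eq_or_ne b ⊤ with rfl | hb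
  · rw [add_top] at h; exact absurd (top_le_iff.mp h) hc.ne
  · exact hb.lt_top

lemma squeeze {a b c d : WithTop ℝ} (hineq : a + b ≤ c + d) (hcb : c ≤ b) (hc : c < ⊤) :
    a ≤ d := by
  have h1 : a + c ≤ d + c := by
    calc a + c ≤ a + b := add_le_add le_rfl hcb
    _ ≤ c + d := hineq
    _ = d + c := add_comm c d
  exact (WithTop.add_le_add_iff_right hc.ne).mp h1

lemma untop'_mono {a b : WithTop ℝ} (hab : a ≤ b) (hb : b < ⊤) :
    a.untopD 0 ≤ b.untopD 0 := by
  lift b to ℝ using hb.ne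
  lift a to ℝ using (lt_of_le_of_lt hab hb).ne
  simpa using WithTop.coe_le_coe.mp hab

lemma minS {h : (E → ℤ) → WithTop ℝ} (hfin : {x : E → ℤ | h x < ⊤}.Finite) (b : E → ℤ)
    (k : ℤ) (hne : ∃ z, h z < ⊤ ∧ innerb b z = k) : (Sset h b k).Nonempty := by
  have hsfin : {y : E → ℤ | h y < ⊤ ∧ innerb b y = k}.Finite :=
    hfin.subset fun y hy => hy.1
  obtain ⟨z, hz⟩ := hne
  obtain ⟨a, ha, hamin⟩ := Set.exists_min_image _ h hsfin ⟨z, hz⟩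
  exact ⟨a, ha.1, ha.2, fun y hy1 hy2 => hamin y ⟨hy1, hy2⟩⟩

/-- Lemma A: if the domain meets level `innerb b x` and a strictly lower level,
then it meets level `innerb b x - 1`. -/
lemma lemA {h : (E → ℤ) → WithTop ℝ} {b : E → ℤ} (hM : MConvex h)
    (hb : ∀ e, b e = 0 ∨ b e = 1) :
    ∀ n : ℕ, ∀ x y : E → ℤ, dist1 x y ≤ n → h x < ⊤ → h y < ⊤ →
      innerb b y < innerb b x → ∃ z, h z < ⊤ ∧ innerb b z = innerb b x - 1 := by
  intro n
  induction n with
  | zero =>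
    intro x y hd hx hy hlt
    rw [dist1_eq_zero (Nat.le_zero.mp hd)] at hlt
    omega
  | succ n ih =>
    intro x y hd hx hy hlt
    obtain ⟨u, hbu, hyu⟩ := exists_dir hb hlt
    obtain ⟨v, hxv, hineq⟩ := hM.2 x y hx hy u hyu
    have huv : u ≠ v := fun e => absurd hxv (by rw [e] at hyu; omega)
    have hrhs : h x + h y < ⊤ := WithTop.add_lt_top.mpr ⟨hx, hy⟩
    have hz1 : h (x - chiv u + chiv v) < ⊤ := fin_left hineq hrhs
    have hw1 : h (y + chiv u - chiv v) < ⊤ := fin_right hineq hrhs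
    rcases hb v with hbv | hbv
    · exact ⟨x - chiv u + chiv v, hz1, by rw [innerb_sub_add, hbu, hbv]; ring⟩
    · have hiy : innerb b (y + chiv u - chiv v) = innerb b y := by
        rw [innerb_add_sub, hbu, hbv]; ring
      have hdlt : dist1 x (y + chiv u - chiv v) ≤ n := by
        have := dist_lt x y u v huv hyu hxv
        omega
      exact ih x (y + chiv u - chiv v) hdlt hx hw1 (by rw [hiy]; exact hlt)

/-- Lemma B: from `x ∈ S_i` and `S_{i-1}` nonempty, there is a transition from `x`
into `S_{i-1}`. -/
lemma lemB {h : (E → ℤ) → WithTop ℝ} {b : E → ℤ} (hM : MConvex h)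
    (hb : ∀ e, b e = 0 ∨ b e = 1) (i : ℤ) :
    ∀ n : ℕ, ∀ x y : E → ℤ, dist1 x y ≤ n → x ∈ Sset h b i → y ∈ Sset h b (i-1) →
      ∃ u v, b u = 1 ∧ b v = 0 ∧ x - chiv u + chiv v ∈ Sset h b (i-1) := by
  intro n
  induction n with
  | zero =>
    intro x y hd hx hy
    exfalso
    obtain ⟨_, hxi, _⟩ := hx
    obtain ⟨_, hyi, _⟩ := hy
    rw [dist1_eq_zero (Nat.le_zero.mp hd)] at hxi
    omega
  | succ n ih =>
    intro x y hd hx hy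
    obtain ⟨hxfin, hxi, hxmin⟩ := hx
    obtain ⟨hyfin, hyi, hymin⟩ := hy
    obtain ⟨u, hbu, hyu⟩ := exists_dir (x := x) (y := y) hb (by rw [hxi, hyi]; omega)
    obtain ⟨v, hxv, hineq⟩ := hM.2 x y hxfin hyfin u hyu
    have huv : u ≠ v := fun e => absurd hxv (by rw [e] at hyu; omega)
    have hrhs : h x + h y < ⊤ := WithTop.add_lt_top.mpr ⟨hxfin, hyfin⟩
    have hz1 : h (x - chiv u + chiv v) < ⊤ := fin_left hineq hrhs
    have hw1 : h (y + chiv u - chiv v) < ⊤ := fin_right hineq hrhs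
    rcases hb v with hbv | hbv
    · -- b v = 0 : direct transition into S_{i-1}
      have hzq : innerb b (x - chiv u + chiv v) = i - 1 := by
        rw [innerb_sub_add, hbu, hbv, hxi]; ring
      have hwq : innerb b (y + chiv u - chiv v) = i := by
        rw [innerb_add_sub, hbu, hbv, hyi]; ring
      have hxw : h x ≤ h (y + chiv u - chiv v) := hxmin _ hw1 hwq
      have hzy : h (x - chiv u + chiv v) ≤ h y := squeeze hineq hxw hxfin
      exact ⟨u, v, hbu, hbv, hz1, hzq,
        fun y2 hy2 hy2q => le_trans hzy (hymin y2 hy2 hy2q)⟩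
    · -- b v = 1 : move y closer to x within S_{i-1}
      have hzq : innerb b (x - chiv u + chiv v) = i := by
        rw [innerb_sub_add, hbu, hbv, hxi]; ring
      have hwq : innerb b (y + chiv u - chiv v) = i - 1 := by
        rw [innerb_add_sub, hbu, hbv, hyi]; ring
      have hxz : h x ≤ h (x - chiv u + chiv v) := hxmin _ hz1 hzq
      have hwy : h (y + chiv u - chiv v) ≤ h y := by
        rw [add_comm (h (x - chiv u + chiv v))] at hineq
        exact squeeze hineq hxz hxfin
      have hyS : (y + chiv u - chiv v) ∈ Sset h b (i-1) :=
        ⟨hw1, hwq, fun y2 hy2 hy2q => le_trans hwy (hymin y2 hy2 hy2q)⟩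
      have hdlt : dist1 x (y + chiv u - chiv v) ≤ n := by
        have := dist_lt x y u v huv hyu hxv
        omega
      exact ih x (y + chiv u - chiv v) hdlt ⟨hxfin, hxi, hxmin⟩ hyS

end Aux
section Main

theorem stmt_9_aux {E : Type*} [Fintype E] [DecidableEq E] [Nonempty E]
    (h : (E → ℤ) → WithTop ℝ) (b : E → ℤ)
    (hM : MConvex h)
    (hfin : {x : E → ℤ | h x < ⊤}.Finite)
    (hb : ∀ e : E, b e = 0 ∨ b e = 1)
    (kmin kmax : ℤ)
    (hkmin : (Sset h b kmin).Nonempty ∧ ∀ k : ℤ, (Sset h b k).Nonempty → kmin ≤ k)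
    (hkmax : (Sset h b kmax).Nonempty ∧ ∀ k : ℤ, (Sset h b k).Nonempty → k ≤ kmax)
    (hgap : kmin + 1 ≤ kmax)
    (i : ℤ) (hi1 : kmin + 1 ≤ i) (hi2 : i ≤ kmax)
    (x : E → ℤ) (hx : x ∈ Sset h b i)
    (x' : E → ℤ) (hx' : x' ∈ Sset h b kmin) :
    ∃ u v : E, b u = 1 ∧ b v = 0 ∧ h (x - chiv u + chiv v) < ⊤ ∧
      (∀ u' v' : E, b u' = 1 → b v' = 0 → h (x - chiv u' + chiv v') < ⊤ →
        h (x - chiv u + chiv v) ≤ h (x - chiv u' + chiv v')) ∧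
      x' u < x u ∧ x v < x' v := by
  obtain ⟨hxfin, hxi, hxmin⟩ := hx
  obtain ⟨hx'fin, hx'k, hx'min⟩ := hx'
  have noBelow : ∀ y : E → ℤ, h y < ⊤ → kmin ≤ innerb b y := fun y hy =>
    hkmin.2 _ (minS hfin b _ ⟨y, hy, rfl⟩)
  -- S_{i-1} is nonempty
  have hSne : (Sset h b (i-1)).Nonempty := by
    obtain ⟨z, hz1, hz2⟩ := lemA hM hb (dist1 x x') x x' le_rfl hxfin hx'fin
      (by rw [hxi, hx'k]; omega)
    exact minS hfin b _ ⟨z, hz1, by rw [hz2, hxi]⟩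
  obtain ⟨y, hyS⟩ := hSne
  -- the set of transition pairs whose target lies in S_{i-1}
  obtain ⟨p0, hp01, hp02, hp03⟩ :
      ∃ u v, b u = 1 ∧ b v = 0 ∧ x - chiv u + chiv v ∈ Sset h b (i-1) := by
    obtain ⟨u, v, h1, h2, h3⟩ := lemB hM hb i (dist1 x y) x y le_rfl ⟨hxfin, hxi, hxmin⟩ hyS
    exact ⟨u, v, h1, h2, h3⟩
  obtain ⟨⟨u, v⟩, hP, hPmin0⟩ := Set.exists_min_image
    {p : E × E | b p.1 = 1 ∧ b p.2 = 0 ∧ x - chiv p.1 + chiv p.2 ∈ Sset h b (i-1)}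
    (fun p => dist1 (x - chiv p.1 + chiv p.2) x') (Set.toFinite _)
    ⟨(p0, hp01), hp02, hp03⟩
  have hbu : b u = 1 := hP.1
  have hbv : b v = 0 := hP.2.1
  obtain ⟨hzfin, hzq, hzmin⟩ :
      h (x - chiv u + chiv v) < ⊤ ∧ innerb b (x - chiv u + chiv v) = i - 1 ∧
        ∀ y2 : E → ℤ, h y2 < ⊤ → innerb b y2 = i - 1 →
          h (x - chiv u + chiv v) ≤ h y2 := hP.2.2
  have hPmin : ∀ q : E × E, b q.1 = 1 → b q.2 = 0 →
      x - chiv q.1 + chiv q.2 ∈ Sset h b (i-1) →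
      dist1 (x - chiv u + chiv v) x' ≤ dist1 (x - chiv q.1 + chiv q.2) x' :=
    fun q h1 h2 h3 => hPmin0 q ⟨h1, h2, h3⟩
  have huv : u ≠ v := fun e => by rw [e, hbv] at hbu; exact absurd hbu.symm one_ne_zero
  have hz_u : (x - chiv u + chiv v) u = x u - 1 := by
    rw [apply_sub_add, if_pos rfl, if_neg huv]; ring
  have hz_v : (x - chiv u + chiv v) v = x v + 1 := by
    rw [apply_sub_add, if_neg (Ne.symm huv), if_pos rfl]; ring
  -- sign condition at u
  have hu : x' u < x u := by
    by_contra hcon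
    push_neg at hcon
    have hzu : (x - chiv u + chiv v) u < x' u := by rw [hz_u]; omega
    obtain ⟨s, hx's, hineq⟩ := hM.2 x' (x - chiv u + chiv v) hx'fin hzfin u hzu
    have hrhs : h x' + h (x - chiv u + chiv v) < ⊤ := WithTop.add_lt_top.mpr ⟨hx'fin, hzfin⟩
    have hfin1 : h (x' - chiv u + chiv s) < ⊤ := fin_left hineq hrhs
    have hfin2 : h ((x - chiv u + chiv v) + chiv u - chiv s) < ⊤ := fin_right hineq hrhs
    rcases hb s with hbs | hbs
    · have := noBelow _ hfin1
      rw [innerb_sub_add, hx'k, hbu, hbs] at this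
      omega
    · have hus : u ≠ s := fun e => by subst e; exact lt_asymm hzu hx's
      have hq1 : innerb b (x' - chiv u + chiv s) = kmin := by
        rw [innerb_sub_add, hx'k, hbu, hbs]; ring
      have hge : h x' ≤ h (x' - chiv u + chiv s) := hx'min _ hfin1 hq1
      have hle : h ((x - chiv u + chiv v) + chiv u - chiv s) ≤ h (x - chiv u + chiv v) := by
        rw [add_comm (h (x' - chiv u + chiv s))] at hineq
        exact squeeze hineq hge hx'fin
      have heq2 : (x - chiv u + chiv v) + chiv u - chiv s = x - chiv s + chiv v := by abel
      rw [heq2] at hle hfin2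
      have hnewS : x - chiv s + chiv v ∈ Sset h b (i-1) :=
        ⟨hfin2, by rw [innerb_sub_add, hxi, hbs, hbv]; ring,
          fun y2 hy2 hy2q => le_trans hle (hzmin y2 hy2 hy2q)⟩
      have hdist := hPmin (s, v) hbs hbv hnewS
      have h3 := dist_lt x' (x - chiv u + chiv v) u s hus hzu hx's
      rw [heq2] at h3
      rw [dist1_comm x' (x - chiv s + chiv v), dist1_comm x' (x - chiv u + chiv v)] at h3
      simp only at hdist
      omega
  -- sign condition at v
  have hv : x v < x' v := by
    by_contra hcon
    push_neg at hcon
    have hzv : x' v < (x - chiv u + chiv v) v := by rw [hz_v]; omega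
    obtain ⟨t, hzt, hineq⟩ := hM.2 (x - chiv u + chiv v) x' hzfin hx'fin v hzv
    have hrhs : h (x - chiv u + chiv v) + h x' < ⊤ := WithTop.add_lt_top.mpr ⟨hzfin, hx'fin⟩
    have hfin1 : h ((x - chiv u + chiv v) - chiv v + chiv t) < ⊤ := fin_left hineq hrhs
    have hfin2 : h (x' + chiv v - chiv t) < ⊤ := fin_right hineq hrhs
    rcases hb t with hbt | hbt
    · have htv : t ≠ v := fun e => by subst e; exact lt_asymm hzv hzt
      have hq1 : innerb b (x' + chiv v - chiv t) = kmin := by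
        rw [innerb_add_sub, hx'k, hbv, hbt]; ring
      have hge : h x' ≤ h (x' + chiv v - chiv t) := hx'min _ hfin2 hq1
      have hle : h ((x - chiv u + chiv v) - chiv v + chiv t) ≤ h (x - chiv u + chiv v) := by
        rw [add_comm (h (x - chiv u + chiv v)) (h x')] at hineq
        exact squeeze hineq hge hx'fin
      have heq2 : (x - chiv u + chiv v) - chiv v + chiv t = x - chiv u + chiv t := by abel
      rw [heq2] at hle hfin1
      have hnewS : x - chiv u + chiv t ∈ Sset h b (i-1) :=
        ⟨hfin1, by rw [innerb_sub_add, hxi, hbu, hbt]; ring,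
          fun y2 hy2 hy2q => le_trans hle (hzmin y2 hy2 hy2q)⟩
      have hdist := hPmin (u, t) hbu hbt hnewS
      have h3 := dist_lt x' (x - chiv u + chiv v) t v htv hzt hzv
      have heq3 : (x - chiv u + chiv v) + chiv t - chiv v = x - chiv u + chiv t := by abel
      rw [heq3] at h3
      rw [dist1_comm x' (x - chiv u + chiv t), dist1_comm x' (x - chiv u + chiv v)] at h3
      simp only at hdist
      omega
    · have := noBelow _ hfin2
      rw [innerb_add_sub, hx'k, hbv, hbt] at this
      omega
  refine ⟨u, v, hbu, hbv, hzfin, ?_, hu, hv⟩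
  intro u' v' hbu' hbv' hfin'
  exact hzmin _ hfin' (by rw [innerb_sub_add, hxi, hbu', hbv']; ring)

end Main

/-- for `x ∈ 𝒮_i` (with `k̲+1 ≤ i ≤ k̄`) and `x' ∈ 𝒮_{k̲}`, there is a
minimum transition `(u,v)` with respect to `x` such that `x(u) > x'(u)` and
`x'(v) > x(v)`. -/
theorem stmt_9 {E : Type*} [Fintype E] [DecidableEq E] [Nonempty E]
    (h : (E → ℤ) → WithTop ℝ) (b : E → ℤ)
    (hM : MConvex h)
    (hfin : {x : E → ℤ | h x < ⊤}.Finite)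
    (hb : ∀ e : E, b e = 0 ∨ b e = 1)
    (kmin kmax : ℤ)
    (hkmin : (Sset h b kmin).Nonempty ∧ ∀ k : ℤ, (Sset h b k).Nonempty → kmin ≤ k)
    (hkmax : (Sset h b kmax).Nonempty ∧ ∀ k : ℤ, (Sset h b k).Nonempty → k ≤ kmax)
    (hgap : kmin + 1 ≤ kmax)
    (i : ℤ) (hi1 : kmin + 1 ≤ i) (hi2 : i ≤ kmax)
    (x : E → ℤ) (hx : x ∈ Sset h b i)
    (x' : E → ℤ) (hx' : x' ∈ Sset h b kmin) :
    ∃ u v : E, IsMinTransitionM h b x u v ∧ x' u < x u ∧ x v < x' v := by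
  obtain ⟨u, v, hbu, hbv, hzfin, hmin, hu, hv⟩ :=
    stmt_9_aux h b hM hfin hb kmin kmax hkmin hkmax hgap i hi1 hi2 x hx x' hx'
  refine ⟨u, v, ⟨⟨hbu, hbv, hzfin⟩, ?_⟩, hu, hv⟩
  rintro u' v' ⟨hbu', hbv', hfin'⟩
  unfold transCostM
  exact sub_le_sub_right (untop'_mono (hmin u' v' hbu' hbv' hfin') hfin') _
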